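/- The Δ-system lemma: every uncountable family of finite sets contains an uncountable subfamily Y and a finite set r such that the intersection of any two distinct members of Y equals r. -/

import Mathlib

private lemma delta_key {α : Type*} [DecidableEq α] :
    ∀ n : ℕ, ∀ X : Set (Finset α), (∀ x ∈ X, x.card ≤ n) → ¬ X.Countable →
    ∃ Y ⊆ X, ¬ Y.Countable ∧
      ∃ r : Finset α, ∀ x ∈ Y, ∀ y ∈ Y, x ≠ y → x ∩ y = r := by
  intro n
  induction n with
  | zero =>
    intro X hcard hX
    exact absurd ((Set.countable_singleton (∅ : Finset α)).mono
      (fun x hx => by simpa using Finset.card_eq_zero.mp (Nat.le_zero.mp (hcard x hx)))) hX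
  | succ n ih =>
    intro X hcard hX
    by_cases hcase : ∃ a : α, ¬ ({x ∈ X | a ∈ x}).Countable
    · obtain ⟨a, ha⟩ := hcase
      set Xa : Set (Finset α) := {x ∈ X | a ∈ x} with hXa
      have hinj : Set.InjOn (fun x : Finset α => x.erase a) Xa := by
        intro x hx y hy hxy
        simp only at hxy
        have : insert a (x.erase a) = insert a (y.erase a) := by rw [hxy]
        rwa [Finset.insert_erase hx.2, Finset.insert_erase hy.2] at this
      have hX' : ¬ ((fun x : Finset α => x.erase a) '' Xa).Countable := by
        intro hc
        exact ha (Set.countable_of_injective_of_countable_image hinj hc)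
      have hcard' : ∀ x ∈ (fun x : Finset α => x.erase a) '' Xa, x.card ≤ n := by
        rintro _ ⟨x, hx, rfl⟩
        simp only [Finset.card_erase_of_mem hx.2]
        exact Nat.sub_le_of_le_add (hcard x hx.1)
      obtain ⟨Y', hY'sub, hY'unc, r, hr⟩ := ih _ hcard' hX'
      refine ⟨{x ∈ Xa | x.erase a ∈ Y'}, fun x hx => hx.1.1, ?_, insert a r, ?_⟩
      · intro hc
        apply hY'unc
        have : Y' ⊆ (fun x : Finset α => x.erase a) '' {x ∈ Xa | x.erase a ∈ Y'} := by
          intro y hy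
          obtain ⟨x, hx, rfl⟩ := hY'sub hy
          exact ⟨x, ⟨hx, hy⟩, rfl⟩
        exact (hc.image _).mono this
      · intro x hx y hy hxy
        have hax : a ∈ x := hx.1.2
        have hay : a ∈ y := hy.1.2
        have hne : x.erase a ≠ y.erase a := fun h => hxy (hinj hx.1 hy.1 h)
        have := hr _ hx.2 _ hy.2 hne
        rw [Finset.erase_inter, Finset.inter_erase, Finset.erase_idem] at this
        have h2 : insert a ((x ∩ y).erase a) = x ∩ y :=
          Finset.insert_erase (Finset.mem_inter.mpr ⟨hax, hay⟩)
        rw [← h2, this]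
    · push_neg at hcase
      -- every element lies in countably many members: find uncountable disjoint family
      have hub : ∀ c ⊆ {Y : Set (Finset α) | Y ⊆ X ∧ ∀ x ∈ Y, ∀ y ∈ Y, x ≠ y → x ∩ y = ∅},
          IsChain (· ⊆ ·) c → ∃ ub ∈ {Y : Set (Finset α) | Y ⊆ X ∧ ∀ x ∈ Y, ∀ y ∈ Y, x ≠ y → x ∩ y = ∅},
          ∀ s ∈ c, s ⊆ ub := by
        intro c hcS hchain
        refine ⟨⋃₀ c, ⟨?_, ?_⟩, fun s hs => Set.subset_sUnion_of_mem hs⟩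
        · exact Set.sUnion_subset fun s hs => (hcS hs).1
        · rintro x ⟨s, hs, hxs⟩ y ⟨t, ht, hyt⟩ hxy
          rcases hchain.total hs ht with h | h
          · exact (hcS ht).2 x (h hxs) y hyt hxy
          · exact (hcS hs).2 x hxs y (h hyt) hxy
      obtain ⟨Y, hYmax⟩ := zorn_subset
        {Y | Y ⊆ X ∧ ∀ x ∈ Y, ∀ y ∈ Y, x ≠ y → x ∩ y = ∅} hub
      refine ⟨Y, hYmax.prop.1, ?_, ∅, hYmax.prop.2⟩
      intro hYc
      apply hX
      have hcover : X ⊆ Y ∪ ⋃ y ∈ Y, ⋃ a ∈ y, {x ∈ X | a ∈ x} := by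
        intro x hx
        by_cases hxY : x ∈ Y
        · exact Or.inl hxY
        by_cases hdisj : ∀ y ∈ Y, x ∩ y = ∅
        · exfalso
          apply hxY
          have : insert x Y ∈ {Y | Y ⊆ X ∧ ∀ x ∈ Y, ∀ y ∈ Y, x ≠ y → x ∩ y = ∅} := by
            refine ⟨Set.insert_subset hx hYmax.prop.1, ?_⟩
            rintro u (rfl | hu) v (rfl | hv) huv
            · exact absurd rfl huv
            · exact hdisj v hv
            · rw [Finset.inter_comm]; exact hdisj u hu
            · exact hYmax.prop.2 u hu v hv huv
          have := hYmax.eq_of_subset this (Set.subset_insert x Y)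
          rw [this]; exact Set.mem_insert x Y
        · push_neg at hdisj
          obtain ⟨y, hy, hney⟩ := hdisj
          obtain ⟨a, haxy⟩ := hney
          refine Or.inr ?_
          simp only [Set.mem_iUnion]
          exact ⟨y, hy, a, (Finset.mem_inter.mp haxy).2, hx, (Finset.mem_inter.mp haxy).1⟩
      refine (hYc.union ?_).mono hcover
      exact hYc.biUnion fun y hy => (y.countable_toSet).biUnion fun a _ => hcase a

/-- The Δ-system lemma: every uncountable family of finite sets contains an uncountable
subfamily `Y` and a finite root `r` such that any two distinct members of `Y` intersect
in exactly `r`. -/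
theorem delta_system_lemma {α : Type*} [DecidableEq α] (X : Set (Finset α)) (hX : ¬ X.Countable) :
    ∃ Y ⊆ X, ¬ Y.Countable ∧
      ∃ r : Finset α, ∀ x ∈ Y, ∀ y ∈ Y, x ≠ y → x ∩ y = r := by
  have : ∃ n : ℕ, ¬ ({x ∈ X | x.card = n}).Countable := by
    by_contra h
    push_neg at h
    apply hX
    have : X ⊆ ⋃ n : ℕ, {x ∈ X | x.card = n} := fun x hx =>
      Set.mem_iUnion.mpr ⟨x.card, hx, rfl⟩
    exact (Set.countable_iUnion h).mono this
  obtain ⟨n, hn⟩ := this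
  obtain ⟨Y, hYsub, hYunc, r, hr⟩ :=
    delta_key n {x ∈ X | x.card = n} (fun x hx => hx.2.le) hn
  exact ⟨Y, fun x hx => (hYsub hx).1, hYunc, r, hr⟩
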